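/- Let 0 < x̄₁ < x̄₂ satisfy x̄₁ = g(x̄₂)f(x̄₁) and x̄₂ = g(x̄₁)f(x̄₂) (a non-homogeneous stationary state of the two-cell reduced system), and write f₁ = f(x̄₁), f₂ = f(x̄₂), f′₁ = f′(x̄₁), f′₂ = f′(x̄₂), g₁ = g(x̄₁), g₂ = g(x̄₂), g′₁ = g′(x̄₁), g′₂ = g′(x̄₂). Then every complex eigenvalue of the Jacobian J = [[f′₁g₂ − 1, f₁g′₂], [f₂g′₁, f′₂g₁ − 1]] has negative real part if and only if 0 < f′₁f′₂g₁g₂ − f₁f₂g′₁g′₂ − f′₁g₂ − f′₂g₁ + 1, equivalently (1 − f′₂g₁)(1 − f′₁g₂) > f₁f₂g′₁g′₂. -/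

import Mathlib

/-- The Hill-type function `f(x) = 1/(a + x^k)` of the reduced Hes1–Notch model. -/
noncomputable def fHill (a : ℝ) (k : ℕ) : ℝ → ℝ := fun x => 1 / (a + x ^ k)

/-- The Hill-type function `g(x) = 1/(1 + b·x^h)` of the reduced Hes1–Notch model. -/
noncomputable def gHill (b : ℝ) (h : ℕ) : ℝ → ℝ := fun x => 1 / (1 + b * x ^ h)

lemma fHill_deriv_neg (a : ℝ) (ha : 0 < a) (k : ℕ) (hk : 1 ≤ k) (x : ℝ) (hx : 0 < x) :
    deriv (fHill a k) x < 0 := by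
  have hden : 0 < a + x ^ k := by positivity
  have hD : HasDerivAt (fHill a k) (-(↑k * x ^ (k - 1)) / (a + x ^ k) ^ 2) x := by
    unfold fHill
    simpa [one_div, Pi.inv_def] using ((hasDerivAt_pow k x).const_add a).inv hden.ne'
  rw [hD.deriv]
  have : 0 < (k : ℝ) * x ^ (k - 1) := by positivity
  exact div_neg_of_neg_of_pos (by linarith) (by positivity)

lemma gHill_pos (b : ℝ) (hb : 0 < b) (h : ℕ) (x : ℝ) (hx : 0 < x) : 0 < gHill b h x := by
  have : 0 < 1 + b * x ^ h := by positivity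
  simpa [gHill] using this

lemma quad_stable_iff (T Δ : ℝ) (hT : T < 0) :
    (∀ z : ℂ, z ^ 2 - (T : ℂ) * z + (Δ : ℂ) = 0 → z.re < 0) ↔ 0 < Δ := by
  constructor
  · intro H
    by_contra hΔ
    push_neg at hΔ
    set s := Real.sqrt (T ^ 2 - 4 * Δ) with hs
    have hsq : s ^ 2 = T ^ 2 - 4 * Δ := Real.sq_sqrt (by nlinarith)
    have hsge : -T ≤ s := by
      have := Real.sqrt_le_sqrt (show T ^ 2 ≤ T ^ 2 - 4 * Δ by linarith)
      rw [Real.sqrt_sq_eq_abs] at this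
      calc -T ≤ |T| := neg_le_abs T
        _ ≤ s := this
    have hr : (0:ℝ) ≤ (T + s) / 2 := by linarith
    have hroot : (((T + s) / 2 : ℝ) : ℂ) ^ 2 - (T : ℂ) * (((T + s) / 2 : ℝ) : ℂ) + (Δ : ℂ) = 0 := by
      have : ((T + s) / 2) ^ 2 - T * ((T + s) / 2) + Δ = 0 := by nlinarith
      exact_mod_cast congrArg (Complex.ofReal) this
    have := H _ hroot
    rw [Complex.ofReal_re] at this
    linarith
  · intro hΔ z hz
    by_contra hre
    push_neg at hre
    have h1 : z.re ^ 2 - z.im ^ 2 - T * z.re + Δ = 0 := by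
      have := congrArg Complex.re hz
      simpa [pow_two, Complex.mul_re, Complex.mul_im] using this
    have h2 : 2 * z.re * z.im - T * z.im = 0 := by
      have := congrArg Complex.im hz
      simp [pow_two, Complex.mul_re, Complex.mul_im] at this
      linarith
    have hy : z.im = 0 := by
      by_contra hy
      have : 2 * z.re - T = 0 := by
        have := mul_eq_zero.mp (show z.im * (2 * z.re - T) = 0 by linarith [h2]; )
        tauto
      linarith
    rw [hy] at h1
    nlinarith

/-- At a non-homogeneous stationary state `0 < x̄₁ < x̄₂` of the two-cell reduced system,
every complex eigenvalue of the Jacobian `J = [[f′₁g₂ − 1, f₁g′₂], [f₂g′₁, f′₂g₁ − 1]]`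
has negative real part if and only if
`0 < f′₁f′₂g₁g₂ − f₁f₂g′₁g′₂ − f′₁g₂ − f′₂g₁ + 1`, equivalently
`(1 − f′₂g₁)(1 − f′₁g₂) > f₁f₂g′₁g′₂`. -/
theorem nonhomogeneous_state_stable_iff
    (a b : ℝ) (ha : 0 < a) (hb : 0 < b) (k h : ℕ) (hk : 1 ≤ k) (hh : 1 ≤ h)
    (x1 x2 : ℝ) (hx1 : 0 < x1) (hx12 : x1 < x2)
    (hrel1 : x1 = gHill b h x2 * fHill a k x1)
    (hrel2 : x2 = gHill b h x1 * fHill a k x2) :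
    ((∀ z : ℂ,
        (Matrix.charpoly
          ((!![deriv (fHill a k) x1 * gHill b h x2 - 1, fHill a k x1 * deriv (gHill b h) x2;
               fHill a k x2 * deriv (gHill b h) x1, deriv (fHill a k) x2 * gHill b h x1 - 1]).map
            Complex.ofReal)).IsRoot z → z.re < 0) ↔
      0 < deriv (fHill a k) x1 * deriv (fHill a k) x2 * gHill b h x1 * gHill b h x2
          - fHill a k x1 * fHill a k x2 * deriv (gHill b h) x1 * deriv (gHill b h) x2
          - deriv (fHill a k) x1 * gHill b h x2 - deriv (fHill a k) x2 * gHill b h x1 + 1) ∧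
    ((0 < deriv (fHill a k) x1 * deriv (fHill a k) x2 * gHill b h x1 * gHill b h x2
          - fHill a k x1 * fHill a k x2 * deriv (gHill b h) x1 * deriv (gHill b h) x2
          - deriv (fHill a k) x1 * gHill b h x2 - deriv (fHill a k) x2 * gHill b h x1 + 1) ↔
      fHill a k x1 * fHill a k x2 * deriv (gHill b h) x1 * deriv (gHill b h) x2 <
        (1 - deriv (fHill a k) x2 * gHill b h x1) * (1 - deriv (fHill a k) x1 * gHill b h x2)) := by
  have hx2 : 0 < x2 := hx1.trans hx12
  set f1 := fHill a k x1
  set f2 := fHill a k x2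
  set g1 := gHill b h x1
  set g2 := gHill b h x2
  set df1 := deriv (fHill a k) x1
  set df2 := deriv (fHill a k) x2
  set dg1 := deriv (gHill b h) x1
  set dg2 := deriv (gHill b h) x2
  have hdf1 : df1 < 0 := fHill_deriv_neg a ha k hk x1 hx1
  have hdf2 : df2 < 0 := fHill_deriv_neg a ha k hk x2 hx2
  have hg1 : 0 < g1 := gHill_pos b hb h x1 hx1
  have hg2 : 0 < g2 := gHill_pos b hb h x2 hx2
  set T : ℝ := (df1 * g2 - 1) + (df2 * g1 - 1) with hTdef
  set Δ : ℝ := (df1 * g2 - 1) * (df2 * g1 - 1) - (f1 * dg2) * (f2 * dg1) with hΔdef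
  have hT : T < 0 := by
    have : df1 * g2 < 0 := mul_neg_of_neg_of_pos hdf1 hg2
    have : df2 * g1 < 0 := mul_neg_of_neg_of_pos hdf2 hg1
    simp only [hTdef]; nlinarith
  constructor
  · have hcp : (Matrix.charpoly
          ((!![df1 * g2 - 1, f1 * dg2; f2 * dg1, df2 * g1 - 1]).map Complex.ofReal)) =
        Polynomial.X ^ 2 - Polynomial.C (T : ℂ) * Polynomial.X + Polynomial.C (Δ : ℂ) := by
      rw [Matrix.charpoly, Matrix.det_fin_two]
      simp only [Matrix.charmatrix_apply_eq, Matrix.charmatrix_apply_ne _ _ _ (by decide : (0:Fin 2) ≠ 1), Matrix.charmatrix_apply_ne _ _ _ (by decide : (1:Fin 2) ≠ 0), Matrix.map_apply, Matrix.of_apply, Matrix.cons_val', Matrix.cons_val_zero, Matrix.cons_val_one, Matrix.head_cons, Matrix.head_fin_const, Matrix.empty_val', Matrix.cons_val_fin_one, hTdef, hΔdef]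
      push_cast
      simp only [map_add, map_mul, map_sub, map_neg, map_one, map_ofNat]
      ring
    rw [hcp]
    have : (∀ z : ℂ, z ^ 2 - (T : ℂ) * z + (Δ : ℂ) = 0 → z.re < 0) ↔ 0 < Δ :=
      quad_stable_iff T Δ hT
    simp only [Polynomial.IsRoot, Polynomial.eval_add, Polynomial.eval_sub,
      Polynomial.eval_pow, Polynomial.eval_mul, Polynomial.eval_C, Polynomial.eval_X]
    rw [this, hΔdef]
    constructor <;> intro <;> nlinarith
  · constructor <;> intro <;> nlinarith
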